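/- Assume 𝐌 : I^p → I^p is a mean-type mapping and K : I^p → I is its unique 𝐌-invariant mean. A function F : I^p → ℝ which is continuous at every point of the diagonal Δ(I^p) := {(u₁,…,u_p) ∈ I^p : u₁ = … = u_p} satisfies the functional equation F ∘ 𝐌 = F if and only if there is a continuous function φ : I → ℝ such that F = φ ∘ K. -/

import Mathlib

open Filter Set Topology

/-- `M` is a mean on the interval `I` (for `p`-tuples): its value is between the
minimum and the maximum of the arguments, for every tuple with entries in `I`. -/
def IsMean (I : Set ℝ) (p : ℕ) (M : (Fin p → ℝ) → ℝ) : Prop :=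
  ∀ v : Fin p → ℝ, (∀ i, v i ∈ I) →
    sInf (Set.range v) ≤ M v ∧ M v ≤ sSup (Set.range v)

/-- A mean-type mapping: every coordinate function is a mean on `I`, and it maps
`I^p` into `I^p`. -/
def IsMeanType (I : Set ℝ) (p : ℕ) (T : (Fin p → ℝ) → Fin p → ℝ) : Prop :=
  (∀ i, IsMean I p fun v => T v i) ∧
    ∀ v : Fin p → ℝ, (∀ i, v i ∈ I) → ∀ i, T v i ∈ I

/-- The unfolded orbit `O*_𝐌(v)`: the `(n*p + i)`-th term (`0 ≤ i < p`) is the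
`i`-th coordinate of `𝐌ⁿ(v)`. -/
def orbitSeq (p : ℕ) (hp : 0 < p) (T : (Fin p → ℝ) → Fin p → ℝ)
    (v : Fin p → ℝ) : ℕ → ℝ :=
  fun k => (T^[k / p] v) ⟨k % p, Nat.mod_lt k hp⟩

/-- If `K` is the unique `𝐌`-invariant mean, then a function
`F : I^p → ℝ` continuous at every diagonal point satisfies `F ∘ 𝐌 = F` iff
`F = φ ∘ K` for some continuous `φ : I → ℝ`. -/
theorem invariant_functions_of_unique_invariant_mean
    {I : Set ℝ} (hne : I.Nonempty) (hI : I.OrdConnected)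
    {p : ℕ} (hp : 2 ≤ p)
    (T : (Fin p → ℝ) → Fin p → ℝ) (hT : IsMeanType I p T)
    (K : (Fin p → ℝ) → ℝ) (hK : IsMean I p K)
    (hKinv : ∀ v : Fin p → ℝ, (∀ i, v i ∈ I) → K (T v) = K v)
    (hKuniq : ∀ K' : (Fin p → ℝ) → ℝ, IsMean I p K' →
      (∀ v : Fin p → ℝ, (∀ i, v i ∈ I) → K' (T v) = K' v) →
      ∀ v : Fin p → ℝ, (∀ i, v i ∈ I) → K' v = K v)
    (F : (Fin p → ℝ) → ℝ)
    (hF : ∀ t ∈ I, ContinuousWithinAt F {v : Fin p → ℝ | ∀ i, v i ∈ I}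
      (fun _ => t)) :
    (∀ v : Fin p → ℝ, (∀ i, v i ∈ I) → F (T v) = F v) ↔
    ∃ φ : ℝ → ℝ, ContinuousOn φ I ∧
      ∀ v : Fin p → ℝ, (∀ i, v i ∈ I) → F v = φ (K v) := by
  haveI : Nonempty (Fin p) := ⟨⟨0, by omega⟩⟩
  set S : Set (Fin p → ℝ) := {v : Fin p → ℝ | ∀ i, v i ∈ I} with hSdef
  -- basic facts about sSup/sInf of ranges
  have hbddA : ∀ w : Fin p → ℝ, BddAbove (Set.range w) :=
    fun w => (Set.finite_range w).bddAbove
  have hbddB : ∀ w : Fin p → ℝ, BddBelow (Set.range w) :=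
    fun w => (Set.finite_range w).bddBelow
  have hBA0 : ∀ w : Fin p → ℝ, sInf (Set.range w) ≤ sSup (Set.range w) :=
    fun w => csInf_le_csSup (Set.range_nonempty w) (hbddB w) (hbddA w)
  -- orbit stays in S
  have horb : ∀ v ∈ S, ∀ n, T^[n] v ∈ S := by
    intro v hv n
    induction n with
    | zero => simpa using hv
    | succ n ih =>
      rw [Function.iterate_succ_apply']
      exact fun i => hT.2 _ ih i
  -- sSup of T w is ≤ sSup of w, sInf of T w ≥ sInf of w
  have hsupT : ∀ w ∈ S, sSup (Set.range (T w)) ≤ sSup (Set.range w) := by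
    intro w hw
    refine csSup_le (Set.range_nonempty _) ?_
    rintro x ⟨i, rfl⟩
    exact (hT.1 i w hw).2
  have hinfT : ∀ w ∈ S, sInf (Set.range w) ≤ sInf (Set.range (T w)) := by
    intro w hw
    refine le_csInf (Set.range_nonempty _) ?_
    rintro x ⟨i, rfl⟩
    exact (hT.1 i w hw).1
  set A : (Fin p → ℝ) → ℕ → ℝ := fun v n => sSup (Set.range (T^[n] v)) with hAdef
  set B : (Fin p → ℝ) → ℕ → ℝ := fun v n => sInf (Set.range (T^[n] v)) with hBdef
  have hAanti : ∀ v ∈ S, Antitone (A v) := by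
    intro v hv
    refine antitone_nat_of_succ_le fun n => ?_
    have : T^[n+1] v = T (T^[n] v) := Function.iterate_succ_apply' T n v
    simp only [hAdef, this]
    exact hsupT _ (horb v hv n)
  have hBmono : ∀ v ∈ S, Monotone (B v) := by
    intro v hv
    refine monotone_nat_of_le_succ fun n => ?_
    have : T^[n+1] v = T (T^[n] v) := Function.iterate_succ_apply' T n v
    simp only [hBdef, this]
    exact hinfT _ (horb v hv n)
  have hBA : ∀ v n, B v n ≤ A v n := fun v n => hBA0 _
  have hAlb : ∀ v ∈ S, ∀ n, B v 0 ≤ A v n :=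
    fun v hv n => (hBmono v hv (Nat.zero_le n)).trans (hBA v n)
  have hBub : ∀ v ∈ S, ∀ n, B v n ≤ A v 0 :=
    fun v hv n => (hBA v n).trans (hAanti v hv (Nat.zero_le n))
  have hbddAv : ∀ v ∈ S, BddBelow (Set.range (A v)) := by
    rintro v hv; exact ⟨B v 0, by rintro x ⟨n, rfl⟩; exact hAlb v hv n⟩
  have hbddBv : ∀ v ∈ S, BddAbove (Set.range (B v)) := by
    rintro v hv; exact ⟨A v 0, by rintro x ⟨n, rfl⟩; exact hBub v hv n⟩
  -- define candidate invariant means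
  set K₁ : (Fin p → ℝ) → ℝ := fun v => ⨅ n, A v n with hK₁def
  set K₂ : (Fin p → ℝ) → ℝ := fun v => ⨆ n, B v n with hK₂def
  have hA0 : ∀ v : Fin p → ℝ, A v 0 = sSup (Set.range v) := by
    intro v; simp [hAdef]
  have hB0 : ∀ v : Fin p → ℝ, B v 0 = sInf (Set.range v) := by
    intro v; simp [hBdef]
  have hK₁mean : IsMean I p K₁ := by
    intro v hv
    constructor
    · rw [← hB0 v]
      exact le_ciInf fun n => hAlb v hv n
    · rw [← hA0 v]
      exact ciInf_le (hbddAv v hv) 0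
  have hK₂mean : IsMean I p K₂ := by
    intro v hv
    constructor
    · rw [← hB0 v]
      exact le_ciSup (hbddBv v hv) 0
    · rw [← hA0 v]
      exact ciSup_le fun n => hBub v hv n
  have hAshift : ∀ v n, A (T v) n = A v (n + 1) := by
    intro v n
    simp only [hAdef, ← Function.iterate_succ_apply]
  have hBshift : ∀ v n, B (T v) n = B v (n + 1) := by
    intro v n
    simp only [hBdef, ← Function.iterate_succ_apply]
  have hTvS : ∀ v ∈ S, T v ∈ S := fun v hv i => hT.2 v hv i
  have hK₁inv : ∀ v : Fin p → ℝ, (∀ i, v i ∈ I) → K₁ (T v) = K₁ v := by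
    intro v hv
    have hv' : v ∈ S := hv
    simp only [hK₁def]
    have h1 : (⨅ n, A (T v) n) = ⨅ n, A v (n + 1) :=
      iInf_congr (hAshift v)
    rw [h1]
    apply le_antisymm
    · refine le_ciInf fun n => ?_
      calc (⨅ n, A v (n + 1)) ≤ A v (n + 1) := ciInf_le ?_ n
        _ ≤ A v n := hAanti v hv' (Nat.le_succ n)
      exact ⟨B v 0, by rintro x ⟨m, rfl⟩; exact hAlb v hv' (m + 1)⟩
    · exact le_ciInf fun n => ciInf_le (hbddAv v hv') (n + 1)
  have hK₂inv : ∀ v : Fin p → ℝ, (∀ i, v i ∈ I) → K₂ (T v) = K₂ v := by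
    intro v hv
    have hv' : v ∈ S := hv
    simp only [hK₂def]
    have h1 : (⨆ n, B (T v) n) = ⨆ n, B v (n + 1) :=
      iSup_congr (hBshift v)
    rw [h1]
    apply le_antisymm
    · exact ciSup_le fun n => le_ciSup (hbddBv v hv') (n + 1)
    · refine ciSup_le fun n => ?_
      calc B v n ≤ B v (n + 1) := hBmono v hv' (Nat.le_succ n)
        _ ≤ ⨆ n, B v (n + 1) := le_ciSup ⟨A v 0, by
              rintro x ⟨m, rfl⟩; exact hBub v hv' (m + 1)⟩ n
  have hK₁eq := hKuniq K₁ hK₁mean hK₁inv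
  have hK₂eq := hKuniq K₂ hK₂mean hK₂inv
  -- convergence of the orbit to the diagonal point (K v, ..., K v)
  have horbtend : ∀ v ∈ S, Tendsto (fun n => T^[n] v) atTop
      (𝓝 (fun _ => K v)) := by
    intro v hv
    have hAt : Tendsto (A v) atTop (𝓝 (K v)) := by
      have := tendsto_atTop_ciInf (hAanti v hv) (hbddAv v hv)
      rwa [show (⨅ n, A v n) = K v from hK₁eq v hv] at this
    have hBt : Tendsto (B v) atTop (𝓝 (K v)) := by
      have := tendsto_atTop_ciSup (hBmono v hv) (hbddBv v hv)
      rwa [show (⨆ n, B v n) = K v from hK₂eq v hv] at this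
    refine tendsto_pi_nhds.2 fun i => ?_
    refine tendsto_of_tendsto_of_tendsto_of_le_of_le hBt hAt ?_ ?_
    · exact fun n => csInf_le (hbddB _) ⟨i, rfl⟩
    · exact fun n => le_csSup (hbddA _) ⟨i, rfl⟩
  have hKvI : ∀ v ∈ S, K v ∈ I := by
    intro v hv
    have h1 : sInf (Set.range v) ∈ Set.range v :=
      (Set.range_nonempty v).csInf_mem (Set.finite_range v)
    have h2 : sSup (Set.range v) ∈ Set.range v :=
      (Set.range_nonempty v).csSup_mem (Set.finite_range v)
    obtain ⟨i, hi⟩ := h1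
    obtain ⟨j, hj⟩ := h2
    exact hI.out (hi ▸ hv i) (hj ▸ hv j) ⟨(hK v hv).1, (hK v hv).2⟩
  constructor
  · intro hFinv
    refine ⟨fun t => F (fun _ => t), ?_, ?_⟩
    · intro t ht
      have hc : ContinuousWithinAt (fun t : ℝ => (fun _ : Fin p => t)) I t :=
        (continuous_pi fun _ => continuous_id).continuousWithinAt
      exact (hF t ht).comp hc (show MapsTo (fun t : ℝ => (fun _ : Fin p => t)) I S from fun s hs i => hs)
    · intro v hv
      have hFn : ∀ n, F (T^[n] v) = F v := by
        intro n
        induction n with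
        | zero => simp
        | succ n ih =>
          rw [Function.iterate_succ_apply', hFinv _ (horb v hv n), ih]
      have hwithin : Tendsto (fun n => T^[n] v) atTop
          (𝓝[S] (fun _ => K v)) :=
        tendsto_nhdsWithin_of_tendsto_nhds_of_eventually_within _
          (horbtend v hv) (Filter.Eventually.of_forall fun n => horb v hv n)
      have hlim : Tendsto (fun n => F (T^[n] v)) atTop
          (𝓝 (F (fun _ => K v))) :=
        (hF (K v) (hKvI v hv)).tendsto.comp hwithin
      have hconst : Tendsto (fun n => F (T^[n] v)) atTop (𝓝 (F v)) := by
        simp only [hFn]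
        exact tendsto_const_nhds
      exact tendsto_nhds_unique hconst hlim
  · rintro ⟨φ, hφ, hφeq⟩ v hv
    rw [hφeq (T v) (hTvS v hv), hφeq v hv, hKinv v hv]
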